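/- Let W be a vector space over F of dimension 2s+1 with basis f_1, ..., f_{2s+1} and let φ be the bilinear form with Gram matrix J_{2s+1}(0). Then the radical of the form φ − φ' (where φ'(v,w) = φ(w,v)) is the one-dimensional subspace spanned by f_1 + f_3 + ... + f_{2s+1}. -/

import Mathlib

variable {F V : Type*} [Field F] [AddCommGroup V] [Module F V]

/-- Left orthogonal complement of a subspace with respect to a bilinear form. -/
def Lc (φ : V →ₗ[F] V →ₗ[F] F) (U : Submodule F V) : Submodule F V where
  carrier := {v | ∀ u ∈ U, φ v u = 0}
  add_mem' := by
    intro a b ha hb u hu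
    simp [map_add, ha u hu, hb u hu]
  zero_mem' := by intro u hu; simp
  smul_mem' := by
    intro c a ha u hu
    simp [ha u hu]

/-- Right orthogonal complement of a subspace with respect to a bilinear form. -/
def Rc (φ : V →ₗ[F] V →ₗ[F] F) (U : Submodule F V) : Submodule F V where
  carrier := {v | ∀ u ∈ U, φ u v = 0}
  add_mem' := by
    intro a b ha hb u hu
    simp [map_add, ha u hu, hb u hu]
  zero_mem' := by intro u hu; simp
  smul_mem' := by
    intro c a ha u hu
    simp [ha u hu]

/-- The odd alternating iterates `L^{2k+1}(V) = L(R(L(...(V))))`. -/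
def Lodd (φ : V →ₗ[F] V →ₗ[F] F) : ℕ → Submodule F V
  | 0 => Lc φ ⊤
  | k + 1 => Lc φ (Rc φ (Lodd φ k))

/-- The odd alternating iterates `R^{2k+1}(V) = R(L(R(...(V))))`. -/
def Rodd (φ : V →ₗ[F] V →ₗ[F] F) : ℕ → Submodule F V
  | 0 => Rc φ ⊤
  | k + 1 => Rc φ (Lc φ (Rodd φ k))

/-- `V_∞ = L_∞(V) + R_∞(V)`. -/
def Vinf (φ : V →ₗ[F] V →ₗ[F] F) : Submodule F V :=
  (⨆ k, Lodd φ k) ⊔ (⨆ k, Rodd φ k)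

/-- `g` is an isometry of the bilinear space `(V, φ)`. -/
def IsIsom (φ : V →ₗ[F] V →ₗ[F] F) (g : V ≃ₗ[F] V) : Prop :=
  ∀ v w : V, φ (g v) (g w) = φ v w

lemma mem_Lc {φ : V →ₗ[F] V →ₗ[F] F} {U : Submodule F V} {v : V} :
    v ∈ Lc φ U ↔ ∀ u ∈ U, φ v u = 0 := Iff.rfl

lemma mem_Rc {φ : V →ₗ[F] V →ₗ[F] F} {U : Submodule F V} {v : V} :
    v ∈ Rc φ U ↔ ∀ u ∈ U, φ u v = 0 := Iff.rfl

lemma sum_ind_eq {n : ℕ} (p : Fin n → Prop) [DecidablePred p] (a : Fin n)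
    (h : ∀ i, p i ↔ i = a) :
    ∑ i : Fin n, (if p i then (1 : F) else 0) = 1 := by
  simp only [h]
  simp

lemma sum_ind_zero {n : ℕ} (p : Fin n → Prop) [DecidablePred p]
    (h : ∀ i, ¬ p i) :
    ∑ i : Fin n, (if p i then (1 : F) else 0) = 0 := by
  simp [h]

lemma sum_mul_ind_eq {n : ℕ} (c : Fin n → F) (p : Fin n → Prop) [DecidablePred p] (a : Fin n)
    (h : ∀ i, p i ↔ i = a) :
    ∑ i : Fin n, c i * (if p i then (1 : F) else 0) = c a := by
  simp only [h, mul_ite, mul_one, mul_zero]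
  simp [Finset.sum_ite_eq']

lemma sum_mul_ind_zero {n : ℕ} (c : Fin n → F) (p : Fin n → Prop) [DecidablePred p]
    (h : ∀ i, ¬ p i) :
    ∑ i : Fin n, c i * (if p i then (1 : F) else 0) = 0 := by
  simp [h]

theorem radical_of_asymmetrized_odd_gabriel_block
    (s : ℕ) {W : Type*} [AddCommGroup W] [Module F W]
    (φ : W →ₗ[F] W →ₗ[F] F) (f : Module.Basis (Fin (2 * s + 1)) F W)
    (hf : ∀ i j : Fin (2 * s + 1),
      φ (f i) (f j) = if (i : ℕ) = (j : ℕ) + 1 then 1 else 0) :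
    Lc (φ - φ.flip) ⊤ ⊓ Rc (φ - φ.flip) ⊤ =
      Submodule.span F
        {∑ j : Fin (s + 1), f ⟨2 * (j : ℕ), by have := j.2; omega⟩} := by
  set ψ := φ - φ.flip with hψdef
  have hψ : ∀ i j : Fin (2 * s + 1), ψ (f i) (f j) =
      (if (i : ℕ) = (j : ℕ) + 1 then (1 : F) else 0)
        - (if (j : ℕ) = (i : ℕ) + 1 then (1 : F) else 0) := by
    intro i j
    simp [hψdef, hf]
  have hanti : ∀ v w : W, ψ v w = - ψ w v := by
    intro v w
    simp only [hψdef, LinearMap.sub_apply, LinearMap.flip_apply]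
    ring
  set w0 : W := ∑ j : Fin (s + 1), f ⟨2 * (j : ℕ), by have := j.2; omega⟩ with hw0
  -- ψ w0 kills every basis vector
  have key : ∀ j : Fin (2 * s + 1), ψ w0 (f j) = 0 := by
    intro j
    rw [hw0, map_sum, LinearMap.sum_apply]
    simp_rw [hψ]
    rw [Finset.sum_sub_distrib]
    rcases Nat.even_or_odd (j : ℕ) with ⟨m, hm⟩ | ⟨m, hm⟩
    · rw [sum_ind_zero (F := F) _ (fun k => by omega),
        sum_ind_zero (F := F) _ (fun k => by omega), sub_zero]
    · have hms : m + 1 < s + 1 := by have := j.2; omega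
      rw [sum_ind_eq (F := F) _ (⟨m + 1, hms⟩ : Fin (s + 1))
          (fun k => by rw [Fin.ext_iff]; simp; omega),
        sum_ind_eq (F := F) _ (⟨m, by omega⟩ : Fin (s + 1))
          (fun k => by rw [Fin.ext_iff]; simp; omega), sub_self]
  have hL0 : ψ w0 = 0 := f.ext fun j => by rw [key j]; simp
  have hR0 : ∀ u : W, ψ u w0 = 0 := by
    intro u
    rw [hanti, hL0]
    simp
  -- the representation of w0
  have hreprw0 : ∀ i : Fin (2 * s + 1),
      f.repr w0 i = if (i : ℕ) % 2 = 0 then (1 : F) else 0 := by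
    intro i
    rw [hw0, map_sum, Finsupp.finset_sum_apply]
    simp_rw [f.repr_self, Finsupp.single_apply]
    split_ifs with hpar
    · obtain ⟨m, hm⟩ : ∃ m, (i : ℕ) = 2 * m := ⟨(i : ℕ) / 2, by omega⟩
      have hms : m < s + 1 := by have := i.2; omega
      exact sum_ind_eq (F := F) _ (⟨m, hms⟩ : Fin (s + 1))
        (fun k => by constructor <;> (intro h; rw [Fin.ext_iff] at *; simp at *; omega))
    · exact sum_ind_zero (F := F) _ (fun k => by
        rw [Fin.ext_iff]; simp; omega)
  apply le_antisymm
  · intro v hv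
    have hL := (Submodule.mem_inf.mp hv).1
    have heq2 : ∀ j : Fin (2 * s + 1),
        (∑ i, f.repr v i * ψ (f i) (f j)) = 0 := by
      intro j
      calc ∑ i, f.repr v i * ψ (f i) (f j)
          = ψ (∑ i, f.repr v i • f i) (f j) := by
            rw [map_sum, LinearMap.sum_apply]
            simp [smul_eq_mul]
        _ = ψ v (f j) := by rw [f.sum_repr]
        _ = 0 := mem_Lc.mp hL (f j) Submodule.mem_top
    have h1 : ∀ (h : 1 < 2 * s + 1), f.repr v ⟨1, h⟩ = 0 := by
      intro h
      have h2 := heq2 ⟨0, by omega⟩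
      simp_rw [hψ, mul_sub] at h2
      rw [Finset.sum_sub_distrib,
        sum_mul_ind_eq (f.repr v) _ (⟨1, h⟩ : Fin (2 * s + 1))
          (fun i => by rw [Fin.ext_iff] <;> simp <;> omega),
        sum_mul_ind_zero (f.repr v) _ (fun i => by simp)] at h2
      simpa using h2
    have hrec : ∀ m (h : m + 2 < 2 * s + 1),
        f.repr v ⟨m + 2, h⟩ = f.repr v ⟨m, by omega⟩ := by
      intro m h
      have h2 := heq2 ⟨m + 1, by omega⟩
      simp_rw [hψ, mul_sub] at h2
      rw [Finset.sum_sub_distrib,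
        sum_mul_ind_eq (f.repr v) _ (⟨m + 2, h⟩ : Fin (2 * s + 1))
          (fun i => by rw [Fin.ext_iff] <;> simp <;> omega),
        sum_mul_ind_eq (f.repr v) _ (⟨m, by omega⟩ : Fin (2 * s + 1))
          (fun i => by rw [Fin.ext_iff] <;> simp <;> omega)] at h2
      linear_combination h2
    have hodd : ∀ m (h : 2 * m + 1 < 2 * s + 1), f.repr v ⟨2 * m + 1, h⟩ = 0 := by
      intro m
      induction m with
      | zero => intro h; exact h1 h
      | succ k ih =>
        intro h
        have e : (⟨2 * (k + 1) + 1, h⟩ : Fin (2 * s + 1)) = ⟨2 * k + 1 + 2, by omega⟩ :=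
          Fin.ext (by show 2 * (k + 1) + 1 = 2 * k + 1 + 2; omega)
        rw [e, hrec (2 * k + 1) (by omega)]
        exact ih (by omega)
    have heven : ∀ m (h : 2 * m < 2 * s + 1),
        f.repr v ⟨2 * m, h⟩ = f.repr v ⟨0, by omega⟩ := by
      intro m
      induction m with
      | zero => intro h; rfl
      | succ k ih =>
        intro h
        have e : (⟨2 * (k + 1), h⟩ : Fin (2 * s + 1)) = ⟨2 * k + 2, by omega⟩ :=
          Fin.ext (by show 2 * (k + 1) = 2 * k + 2; omega)
        rw [e, hrec (2 * k) (by omega)]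
        exact ih (by omega)
    have hv0 : v = (f.repr v ⟨0, by omega⟩) • w0 := by
      apply f.repr.injective
      rw [map_smul]
      ext i
      rw [Finsupp.smul_apply, hreprw0 i, smul_eq_mul]
      rcases Nat.even_or_odd (i : ℕ) with ⟨m, hm⟩ | ⟨m, hm⟩
      · rw [if_pos (by omega), mul_one]
        have hi : i = ⟨2 * m, by have := i.2; omega⟩ :=
          Fin.ext (by show (i : ℕ) = 2 * m; omega)
        rw [hi]
        exact heven m _
      · rw [if_neg (by omega), mul_zero]
        have hi : i = ⟨2 * m + 1, by have := i.2; omega⟩ :=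
          Fin.ext (by show (i : ℕ) = 2 * m + 1; omega)
        rw [hi]
        exact hodd m _
    rw [hv0]
    exact Submodule.smul_mem _ _ (Submodule.mem_span_singleton_self w0)
  · rw [Submodule.span_le, Set.singleton_subset_iff]
    refine Submodule.mem_inf.mpr ⟨mem_Lc.mpr fun u _ => by rw [hL0]; simp,
      mem_Rc.mpr fun u _ => hR0 u⟩
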